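/- Let D ⊆ ℝ be countable and a_α ∈ ℂ. If ∑_{α∈D} a_α z^α converges absolutely on a nonempty open subset U of ℂ \ {0}, then its sum defines a holomorphic function on {z ∈ U : arg z ≠ 0} (with z^α = e^{α log z} for the branch 0 ≤ arg z < 2π), and the term-wise derivative series ∑_{α∈D} a_α α z^{α-1} converges absolutely and locally uniformly near every point of U to the derivative of this function. -/

import Mathlib

/-- The branch of the logarithm with argument in `[0, 2π)`. -/
noncomputable def logBranch (z : ℂ) : ℂ :=
  Real.log ‖z‖ +
    (if 0 ≤ z.arg then (z.arg : ℝ) else z.arg + 2 * Real.pi) * Complex.I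

open Filter

/-- `x e^{-cx} ≤ 1/c` for `x ≥ 0`, `c > 0`. -/
lemma aux_mul_exp {c x : ℝ} (hc : 0 < c) (hx : 0 ≤ x) :
    x * Real.exp (-(c * x)) ≤ 1 / c := by
  have h1 : c * x ≤ Real.exp (c * x) := by
    have := Real.add_one_le_exp (c * x); linarith
  have hepos := Real.exp_pos (c * x)
  have h2 : x ≤ Real.exp (c * x) / c := by
    rw [le_div_iff₀ hc]; nlinarith
  calc x * Real.exp (-(c * x)) ≤ Real.exp (c * x) / c * Real.exp (-(c * x)) := by
        apply mul_le_mul_of_nonneg_right h2 (Real.exp_nonneg _)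
    _ = 1 / c := by
        rw [div_mul_eq_mul_div, ← Real.exp_add]
        simp
  -- done

/-- Exponential form of the key bound. -/
lemma keyBoundExp {L₁ Llo Lhi L₂ : ℝ} (h2 : L₁ < Llo) (h4 : Lhi < L₂) :
    ∃ C : ℝ, 0 ≤ C ∧ ∀ α L : ℝ, Llo ≤ L → L ≤ Lhi →
      |α| * Real.exp (L * α) ≤ C * (Real.exp (L₁ * α) + Real.exp (L₂ * α)) := by
  refine ⟨max (1 / (L₂ - Lhi)) (1 / (Llo - L₁)), ?_, fun α L h5 h6 => ?_⟩
  · exact le_max_of_le_left (div_nonneg zero_le_one (by linarith))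
  set C := max (1 / (L₂ - Lhi)) (1 / (Llo - L₁)) with hCdef
  have hC0 : 0 ≤ C := le_max_of_le_left (div_nonneg zero_le_one (by linarith))
  rcases le_or_gt 0 α with hα | hα
  · rw [abs_of_nonneg hα]
    have hcpos : 0 < L₂ - L := by linarith
    have key : α * Real.exp (-((L₂ - L) * α)) ≤ 1 / (L₂ - L) := aux_mul_exp hcpos hα
    have hle : 1 / (L₂ - L) ≤ C := le_trans
      (one_div_le_one_div_of_le (by linarith) (by linarith)) (le_max_left _ _)
    calc α * Real.exp (L * α)
        = α * Real.exp (-((L₂ - L) * α)) * Real.exp (L₂ * α) := by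
          rw [mul_assoc, ← Real.exp_add]; ring_nf
      _ ≤ C * Real.exp (L₂ * α) :=
          mul_le_mul_of_nonneg_right (key.trans hle) (Real.exp_nonneg _)
      _ ≤ C * (Real.exp (L₁ * α) + Real.exp (L₂ * α)) := by
          apply mul_le_mul_of_nonneg_left _ hC0
          have := Real.exp_nonneg (L₁ * α); linarith
  · rw [abs_of_neg hα]
    have hcpos : 0 < L - L₁ := by linarith
    have key : -α * Real.exp (-((L - L₁) * -α)) ≤ 1 / (L - L₁) :=
      aux_mul_exp hcpos (by linarith)
    have hle : 1 / (L - L₁) ≤ C := le_trans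
      (one_div_le_one_div_of_le (by linarith) (by linarith)) (le_max_right _ _)
    calc -α * Real.exp (L * α)
        = -α * Real.exp (-((L - L₁) * -α)) * Real.exp (L₁ * α) := by
          rw [mul_assoc, ← Real.exp_add]; ring_nf
      _ ≤ C * Real.exp (L₁ * α) :=
          mul_le_mul_of_nonneg_right (key.trans hle) (Real.exp_nonneg _)
      _ ≤ C * (Real.exp (L₁ * α) + Real.exp (L₂ * α)) := by
          apply mul_le_mul_of_nonneg_left _ hC0
          have := Real.exp_nonneg (L₂ * α); linarith

/-- The key bound: `|α| r^{α-1} ≤ C (r₁^α + r₂^α)` uniformly for `r ∈ [rlo, rhi]`. -/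
lemma keyBound {r₁ rlo rhi r₂ : ℝ} (h1 : 0 < r₁) (h2 : r₁ < rlo) (h3 : rlo ≤ rhi)
    (h4 : rhi < r₂) :
    ∃ C : ℝ, 0 ≤ C ∧ ∀ α r : ℝ, rlo ≤ r → r ≤ rhi →
      |α| * r ^ (α - 1) ≤ C * (r₁ ^ α + r₂ ^ α) := by
  have hrlo : 0 < rlo := h1.trans h2
  have hr₂ : 0 < r₂ := lt_of_le_of_lt (hrlo.le.trans h3) h4
  obtain ⟨C, hC0, hC⟩ := keyBoundExp (Real.log_lt_log h1 h2)
    (Real.log_lt_log (hrlo.trans_le h3) h4)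
  refine ⟨C / rlo, by positivity, fun α r hlo hhi => ?_⟩
  have hr : 0 < r := hrlo.trans_le hlo
  have h5 : Real.log rlo ≤ Real.log r := Real.log_le_log hrlo hlo
  have h6 : Real.log r ≤ Real.log rhi := Real.log_le_log hr hhi
  have key := hC α (Real.log r) h5 h6
  have hrw : r ^ (α - 1) = Real.exp (Real.log r * α) / r := by
    rw [Real.rpow_def_of_pos hr, mul_sub, mul_one, Real.exp_sub, Real.exp_log hr]
  rw [hrw, Real.rpow_def_of_pos h1, Real.rpow_def_of_pos hr₂]
  rw [mul_div_assoc']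
  calc |α| * Real.exp (Real.log r * α) / r
      ≤ C * (Real.exp (Real.log r₁ * α) + Real.exp (Real.log r₂ * α)) / rlo :=
        div_le_div₀ (by positivity) key hrlo hlo
    _ = C / rlo * (Real.exp (Real.log r₁ * α) + Real.exp (Real.log r₂ * α)) := by
        ring

lemma norm_exp_mul_logBranch (c : ℝ) {z : ℂ} (hz : z ≠ 0) :
    ‖Complex.exp ((c : ℂ) * logBranch z)‖ = ‖z‖ ^ c := by
  rw [Complex.norm_exp]
  have hre : ((c : ℂ) * logBranch z).re = c * Real.log ‖z‖ := by
    simp [logBranch, Complex.mul_re, Complex.add_re, Complex.add_im,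
      Complex.ofReal_re, Complex.ofReal_im, Complex.mul_im]
  rw [hre, Real.rpow_def_of_pos (norm_pos_iff.2 hz), mul_comm]

lemma exp_logBranch {z : ℂ} (hz : z ≠ 0) : Complex.exp (logBranch z) = z := by
  have habs : Complex.exp ((Real.log ‖z‖ : ℝ) : ℂ) = (‖z‖ : ℂ) := by
    rw [← Complex.ofReal_exp, Real.exp_log (norm_pos_iff.mpr hz)]
  unfold logBranch
  split_ifs with h
  · rw [Complex.exp_add, habs, Complex.norm_mul_exp_arg_mul_I]
  · rw [Complex.exp_add, habs]
    have h2 : ((z.arg + 2 * Real.pi : ℝ) : ℂ) * Complex.I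
        = (z.arg : ℂ) * Complex.I + 2 * (Real.pi : ℂ) * Complex.I := by
      push_cast; ring
    rw [h2, Complex.exp_add, Complex.exp_two_pi_mul_I, mul_one,
      Complex.norm_mul_exp_arg_mul_I]

lemma logBranch_eq {z : ℂ} (hz : z ≠ 0) (ha : z.arg ≠ 0) :
    logBranch z = Complex.log (-z) + (Real.pi : ℂ) * Complex.I := by
  have habs : ‖-z‖ = ‖z‖ := by simp
  have hlog : Complex.log (-z)
      = ((Real.log ‖z‖ : ℝ) : ℂ) + ((-z).arg : ℂ) * Complex.I := by
    rw [Complex.log, habs]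
  rcases lt_trichotomy z.im 0 with hlt | heq | hgt
  · have hnn : ¬ (0 ≤ z.arg) := not_le.2 (Complex.arg_neg_iff.2 hlt)
    rw [logBranch, if_neg hnn, hlog, Complex.arg_neg_eq_arg_add_pi_of_im_neg hlt]
    push_cast; ring
  · have hre : z.re < 0 := by
      by_contra hcon
      exact ha (Complex.arg_eq_zero_iff.2 ⟨not_lt.1 hcon, heq⟩)
    have harg : z.arg = Real.pi := Complex.arg_eq_pi_iff.2 ⟨hre, heq⟩
    have hargneg : (-z).arg = 0 := by
      apply Complex.arg_eq_zero_iff.2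
      constructor
      · simp [Complex.neg_re]; linarith
      · simp [Complex.neg_im, heq]
    rw [logBranch, if_pos (by rw [harg]; exact Real.pi_pos.le), hlog, harg, hargneg]
    push_cast; ring
  · have hnn : 0 ≤ z.arg := Complex.arg_nonneg_iff.2 hgt.le
    rw [logBranch, if_pos hnn, hlog, Complex.arg_neg_eq_arg_sub_pi_of_im_pos hgt]
    push_cast; ring

lemma mem_S_iff {z : ℂ} : (z.re < 0 ∨ z.im ≠ 0) ↔ (z ≠ 0 ∧ z.arg ≠ 0) := by
  constructor
  · intro h
    have hz : z ≠ 0 := by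
      rintro rfl
      simp at h
    refine ⟨hz, fun ha => ?_⟩
    obtain ⟨h1, h2⟩ := Complex.arg_eq_zero_iff.1 ha
    rcases h with h | h
    · linarith
    · exact h h2
  · rintro ⟨hz, ha⟩
    by_contra hcon
    push_neg at hcon
    exact ha (Complex.arg_eq_zero_iff.2 ⟨hcon.1, hcon.2⟩)

lemma isOpen_S : IsOpen {z : ℂ | z.re < 0 ∨ z.im ≠ 0} :=
  (isOpen_lt Complex.continuous_re continuous_const).union
    (isOpen_ne_fun Complex.continuous_im continuous_const)

/-- Derivative of a single term `c e^{α logBranch z}` away from the branch cut. -/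
lemma term_hasDerivAt (c : ℂ) (α : ℝ) {w : ℂ} (hw : w.re < 0 ∨ w.im ≠ 0) :
    HasDerivAt (fun z : ℂ => c * Complex.exp ((α : ℂ) * logBranch z))
      (c * (α : ℂ) * Complex.exp (((α : ℂ) - 1) * logBranch w)) w := by
  obtain ⟨hw0, hwa⟩ := mem_S_iff.1 hw
  have hslit : -w ∈ Complex.slitPlane := by
    rw [Complex.mem_slitPlane_iff, Complex.neg_re, Complex.neg_im, neg_pos, neg_ne_zero]
    exact hw
  have h1 : HasDerivAt (fun z : ℂ => Complex.log (-z)) w⁻¹ w := by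
    have hcomp := (Complex.hasDerivAt_log hslit).comp w (hasDerivAt_neg w)
    have heq : (-w)⁻¹ * (-1) = w⁻¹ := by
      field_simp
    rw [heq] at hcomp
    exact hcomp
  have h2 : HasDerivAt
      (fun z : ℂ => (α : ℂ) * (Complex.log (-z) + (Real.pi : ℂ) * Complex.I))
      ((α : ℂ) * w⁻¹) w := (h1.add_const _).const_mul _
  have h3 : HasDerivAt
      (fun z : ℂ => c * Complex.exp ((α : ℂ) * (Complex.log (-z) + (Real.pi : ℂ) * Complex.I)))
      (c * (Complex.exp ((α : ℂ) * (Complex.log (-w) + (Real.pi : ℂ) * Complex.I))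
        * ((α : ℂ) * w⁻¹))) w := h2.cexp.const_mul c
  have heq : (fun z : ℂ => c * Complex.exp ((α : ℂ) * logBranch z))
      =ᶠ[nhds w] (fun z : ℂ =>
        c * Complex.exp ((α : ℂ) * (Complex.log (-z) + (Real.pi : ℂ) * Complex.I))) := by
    filter_upwards [isOpen_S.mem_nhds hw] with z hz
    obtain ⟨hz0, hza⟩ := mem_S_iff.1 hz
    rw [logBranch_eq hz0 hza]
  have h4 := h3.congr_of_eventuallyEq heq
  refine h4.congr_deriv ?_
  rw [← logBranch_eq hw0 hwa, sub_mul, one_mul, Complex.exp_sub, exp_logBranch hw0]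
  field_simp

/-- The master construction: a neighborhood on which the differentiated series has a
summable uniform majorant. -/
lemma master {D : Set ℝ} {a : ℝ → ℂ} {U : Set ℂ} (hU : IsOpen U) (hU0 : (0 : ℂ) ∉ U)
    (habs : ∀ z ∈ U, Summable fun α : D => ‖a (α : ℝ)‖ * ‖z‖ ^ (α : ℝ))
    {z₀ : ℂ} (hz₀ : z₀ ∈ U) :
    ∃ V : Set ℂ, IsOpen V ∧ z₀ ∈ V ∧ V ⊆ U ∧ ∃ u : D → ℝ, Summable u ∧
      ∀ (α : D), ∀ z ∈ V, ‖a (α : ℝ)‖ * |(α : ℝ)| * ‖z‖ ^ ((α : ℝ) - 1) ≤ u α := by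
  have hz₀0 : z₀ ≠ 0 := fun h => hU0 (h ▸ hz₀)
  have hr₀ : 0 < ‖z₀‖ := norm_pos_iff.2 hz₀0
  obtain ⟨ε, hε, hball⟩ := Metric.isOpen_iff.1 hU z₀ hz₀
  set r₀ := ‖z₀‖ with hr₀def
  set c := min (ε / (2 * r₀)) (1 / 2) with hcdef
  have hc0 : 0 < c := lt_min (by positivity) (by norm_num)
  have hc2 : c ≤ 1 / 2 := min_le_right _ _
  have hcr : c * r₀ ≤ ε / 2 := by
    have h := min_le_left (ε / (2 * r₀)) (1 / 2)
    calc c * r₀ ≤ ε / (2 * r₀) * r₀ := mul_le_mul_of_nonneg_right h hr₀.le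
      _ = ε / 2 := by field_simp
  have hmem : ∀ t : ℝ, |t - 1| ≤ c → ((t : ℝ) : ℂ) * z₀ ∈ U := by
    intro t ht
    apply hball
    rw [Metric.mem_ball, dist_eq_norm]
    have h : ((t : ℝ) : ℂ) * z₀ - z₀ = ((t - 1 : ℝ) : ℂ) * z₀ := by push_cast; ring
    rw [h, norm_mul, Complex.norm_real, Real.norm_eq_abs]
    calc |t - 1| * r₀ ≤ c * r₀ := mul_le_mul_of_nonneg_right ht hr₀.le
      _ ≤ ε / 2 := hcr
      _ < ε := by linarith
  have hz₁U : ((1 - c : ℝ) : ℂ) * z₀ ∈ U := by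
    apply hmem
    rw [show (1 - c) - 1 = -c by ring, abs_neg, abs_of_pos hc0]
  have hz₂U : ((1 + c : ℝ) : ℂ) * z₀ ∈ U := by
    apply hmem
    rw [show (1 + c) - 1 = c by ring, abs_of_pos hc0]
  have hn₁ : ‖((1 - c : ℝ) : ℂ) * z₀‖ = (1 - c) * r₀ := by
    rw [norm_mul, Complex.norm_real, Real.norm_eq_abs, abs_of_pos (by linarith)]
  have hn₂ : ‖((1 + c : ℝ) : ℂ) * z₀‖ = (1 + c) * r₀ := by
    rw [norm_mul, Complex.norm_real, Real.norm_eq_abs, abs_of_pos (by linarith)]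
  -- the bounds
  obtain ⟨C, hC0, hC⟩ := keyBound
    (show (0 : ℝ) < (1 - c) * r₀ by nlinarith)
    (show (1 - c) * r₀ < (1 - c / 2) * r₀ by nlinarith)
    (show (1 - c / 2) * r₀ ≤ (1 + c / 2) * r₀ by nlinarith)
    (show (1 + c / 2) * r₀ < (1 + c) * r₀ by nlinarith)
  refine ⟨Metric.ball z₀ (c / 2 * r₀), Metric.isOpen_ball,
    Metric.mem_ball_self (by positivity), ?_, ?_⟩
  · intro z hz
    apply hball
    rw [Metric.mem_ball] at hz ⊢
    have : c / 2 * r₀ ≤ ε / 2 := by nlinarith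
    linarith
  refine ⟨fun α => ‖a (α : ℝ)‖ * (C * (((1 - c) * r₀) ^ (α : ℝ) + ((1 + c) * r₀) ^ (α : ℝ))),
    ?_, ?_⟩
  · have hs₁ := (habs _ hz₁U).mul_left C
    have hs₂ := (habs _ hz₂U).mul_left C
    have hsum := hs₁.add hs₂
    apply hsum.congr
    intro α
    rw [hn₁, hn₂]
    ring
  · intro α z hz
    rw [Metric.mem_ball, dist_eq_norm] at hz
    have hb : |‖z‖ - r₀| ≤ ‖z - z₀‖ := abs_norm_sub_norm_le z z₀
    have hb1 : (1 - c / 2) * r₀ ≤ ‖z‖ := by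
      rw [abs_le] at hb
      nlinarith [hz, hb.1]
    have hb2 : ‖z‖ ≤ (1 + c / 2) * r₀ := by
      rw [abs_le] at hb
      nlinarith [hz, hb.2]
    have hkey := hC (α : ℝ) ‖z‖ hb1 hb2
    rw [mul_assoc]
    exact mul_le_mul_of_nonneg_left hkey (norm_nonneg _)

lemma norm_term_deriv {D : Set ℝ} (a : ℝ → ℂ) (α : D) {z : ℂ} (hz : z ≠ 0) :
    ‖a (α : ℝ) * ((α : ℝ) : ℂ) * Complex.exp ((((α : ℝ) : ℂ) - 1) * logBranch z)‖
      = ‖a (α : ℝ)‖ * |(α : ℝ)| * ‖z‖ ^ ((α : ℝ) - 1) := by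
  have hcast : (((α : ℝ) : ℂ) - 1) = ((((α : ℝ) - 1 : ℝ)) : ℂ) := by push_cast; ring
  rw [hcast, norm_mul, norm_mul, Complex.norm_real, Real.norm_eq_abs,
    norm_exp_mul_logBranch _ hz]

/-- if `∑_{α∈D} a_α z^α` (real exponents, `z^α = e^{α Log z}` for the
branch with argument in `[0,2π)`) converges absolutely on a nonempty open
`U ⊆ ℂ \ {0}`, then: the term-wise differentiated series converges absolutely on `U`
and locally uniformly near every point of `U`, and the sum function is holomorphic on
`{z ∈ U : arg z ≠ 0}` with derivative given by the term-wise differentiated series. -/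
theorem stmt_14 (D : Set ℝ) (hD : D.Countable) (a : ℝ → ℂ)
    (U : Set ℂ) (hU : IsOpen U) (hUne : U.Nonempty) (hU0 : (0 : ℂ) ∉ U)
    (habs : ∀ z ∈ U, Summable fun α : D => ‖a (α : ℝ)‖ * ‖z‖ ^ (α : ℝ)) :
    (∀ z ∈ U, Summable fun α : D =>
      ‖a (α : ℝ)‖ * |(α : ℝ)| * ‖z‖ ^ ((α : ℝ) - 1)) ∧
    (∀ z₀ ∈ U, ∃ V : Set ℂ, IsOpen V ∧ z₀ ∈ V ∧ V ⊆ U ∧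
      TendstoUniformlyOn
        (fun (s : Finset D) (z : ℂ) =>
          ∑ α ∈ s, a (α : ℝ) * (α : ℝ) * Complex.exp ((((α : ℝ) : ℂ) - 1) * logBranch z))
        (fun z : ℂ => ∑' α : D,
          a (α : ℝ) * (α : ℝ) * Complex.exp ((((α : ℝ) : ℂ) - 1) * logBranch z))
        Filter.atTop V) ∧
    (∀ z ∈ U, Complex.arg z ≠ 0 →
      HasDerivAt
        (fun w : ℂ => ∑' α : D, a (α : ℝ) * Complex.exp (((α : ℝ) : ℂ) * logBranch w))
        (∑' α : D,
          a (α : ℝ) * (α : ℝ) * Complex.exp ((((α : ℝ) : ℂ) - 1) * logBranch z)) z) := by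
  have hne : ∀ z ∈ U, z ≠ (0 : ℂ) := fun z hz h => hU0 (h ▸ hz)
  -- Part 2 (proved first, for each z₀ ∈ U)
  have part2 : ∀ z₀ ∈ U, ∃ V : Set ℂ, IsOpen V ∧ z₀ ∈ V ∧ V ⊆ U ∧
      TendstoUniformlyOn
        (fun (s : Finset D) (z : ℂ) =>
          ∑ α ∈ s, a (α : ℝ) * (α : ℝ) * Complex.exp ((((α : ℝ) : ℂ) - 1) * logBranch z))
        (fun z : ℂ => ∑' α : D,
          a (α : ℝ) * (α : ℝ) * Complex.exp ((((α : ℝ) : ℂ) - 1) * logBranch z))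
        Filter.atTop V := by
    intro z₀ hz₀
    obtain ⟨V, hVopen, hz₀V, hVU, u, hu, hbound⟩ := master hU hU0 habs hz₀
    refine ⟨V, hVopen, hz₀V, hVU, ?_⟩
    apply tendstoUniformlyOn_tsum hu
    intro α z hz
    rw [norm_term_deriv a α (hne z (hVU hz))]
    exact hbound α z hz
  refine ⟨?_, part2, ?_⟩
  · -- Part 1
    intro z hz
    obtain ⟨V, hVopen, hzV, hVU, u, hu, hbound⟩ := master hU hU0 habs hz
    apply Summable.of_nonneg_of_le _ (fun α => hbound α z hzV) hu
    intro α
    positivity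
  · -- Part 3
    intro z hz ha
    obtain ⟨V, hVopen, hzV, hVU, hTU⟩ := part2 z hz
    set S : Set ℂ := {w : ℂ | w.re < 0 ∨ w.im ≠ 0} with hSdef
    have hzS : z ∈ S := mem_S_iff.2 ⟨hne z hz, ha⟩
    have hsopen : IsOpen (V ∩ S) := hVopen.inter isOpen_S
    have hzVS : z ∈ V ∩ S := ⟨hzV, hzS⟩
    apply hasDerivAt_of_tendstoUniformlyOn hsopen
      (hTU.mono Set.inter_subset_left)
    · -- each partial sum has the termwise derivative
      apply Filter.Eventually.of_forall
      intro s x hx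
      apply HasDerivAt.sum
      intro α _
      exact term_hasDerivAt (a (α : ℝ)) (α : ℝ) hx.2
    · -- pointwise convergence
      intro x hx
      have hxU : x ∈ U := hVU hx.1
      have hx0 : x ≠ 0 := hne x hxU
      have hsummable : Summable fun α : D =>
          a (α : ℝ) * Complex.exp ((((α : ℝ)) : ℂ) * logBranch x) := by
        apply Summable.of_norm
        apply (habs x hxU).congr
        intro α
        rw [norm_mul, norm_exp_mul_logBranch _ hx0]
      have h := hsummable.hasSum
      simp only [Finset.sum_apply]
      exact h
    · exact hzVS
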